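/- If M is a symmetric positive definite real n×n matrix and A is a symmetric real n×n matrix, then there exists an invertible matrix S and a diagonal matrix Λ such that A S = M S Λ and S^T M S = I (solvability of the generalized eigenvalue problem by M-orthonormal eigenvectors). -/

import Mathlib

open Matrix

/-- Solvability of the generalized eigenvalue problem with `M`-orthonormal eigenvectors. -/
theorem generalized_eigenproblem_solvable (n : ℕ) (A M : Matrix (Fin n) (Fin n) ℝ)
    (hA : A.IsSymm) (hM : M.PosDef) :
    ∃ (S : Matrix (Fin n) (Fin n) ℝ) (lam : Fin n → ℝ),
      IsUnit S ∧ A * S = M * S * Matrix.diagonal lam ∧ Sᵀ * M * S = 1 := by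
  classical
  open scoped MatrixOrder in
  set L := CFC.sqrt M with hLdef
  open scoped MatrixOrder in
  have hLL : L * L = M := CFC.sqrt_mul_sqrt_self M hM.posSemidef.nonneg
  open scoped MatrixOrder in
  have hLsym : Lᵀ = L := (CFC.sqrt_nonneg M).posSemidef.1
  have hdetL : L.det ≠ 0 := by
    intro h
    have : M.det = 0 := by rw [← hLL, det_mul, h, mul_zero]
    exact (ne_of_gt hM.det_pos) this
  have hLinv : L * L⁻¹ = 1 := mul_nonsing_inv L (isUnit_iff_ne_zero.mpr hdetL)
  have hLinv' : L⁻¹ * L = 1 := nonsing_inv_mul L (isUnit_iff_ne_zero.mpr hdetL)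
  set B := L⁻¹ * A * L⁻¹ with hBdef
  have hBherm : B.IsHermitian := by
    have hAsym : Aᵀ = A := hA
    have hLtinv : (L⁻¹)ᵀ = L⁻¹ := by rw [transpose_nonsing_inv, hLsym]
    show Bᴴ = B
    simp only [conjTranspose_eq_transpose_of_trivial, hBdef, transpose_mul, hLtinv, hAsym]
    rw [mul_assoc]
  set U : Matrix (Fin n) (Fin n) ℝ := (hBherm.eigenvectorUnitary : Matrix (Fin n) (Fin n) ℝ) with hUdef
  have hUU : star U * U = 1 := (Matrix.mem_unitaryGroup_iff').mp hBherm.eigenvectorUnitary.2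
  have hUU' : U * star U = 1 := (Matrix.mem_unitaryGroup_iff).mp hBherm.eigenvectorUnitary.2
  have hspec : B = U * Matrix.diagonal hBherm.eigenvalues * star U := by
    have := hBherm.spectral_theorem
    simpa using this
  refine ⟨L⁻¹ * U, hBherm.eigenvalues, ?_, ?_, ?_⟩
  · have hLunit : IsUnit L := (Matrix.isUnit_iff_isUnit_det L).mpr (isUnit_iff_ne_zero.mpr hdetL)
    exact (isUnit_nonsing_inv_iff.mpr hLunit).mul (isUnit_iff_exists.mpr ⟨star U, hUU', hUU⟩)
  · -- A * (L⁻¹ * U) = M * (L⁻¹ * U) * diagonal lam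
    have hBU : B * U = U * Matrix.diagonal hBherm.eigenvalues := by
      conv_lhs => rw [hspec]
      rw [mul_assoc, hUU, mul_one]
    calc A * (L⁻¹ * U) = L * (B * U) := by
          rw [hBdef]
          rw [show L * (L⁻¹ * A * L⁻¹ * U) = (L * L⁻¹) * A * (L⁻¹ * U) by
              simp only [mul_assoc], hLinv, one_mul]
      _ = L * U * Matrix.diagonal hBherm.eigenvalues := by rw [hBU, mul_assoc]
      _ = M * (L⁻¹ * U) * Matrix.diagonal hBherm.eigenvalues := by
          rw [← hLL, show L * L * (L⁻¹ * U) = L * (L * L⁻¹) * U by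
              simp only [mul_assoc], hLinv, mul_one]
  · have hLtinv : (L⁻¹)ᵀ = L⁻¹ := by rw [transpose_nonsing_inv, hLsym]
    have hstarU : star U = Uᵀ := by
      ext i j; simp [star_apply]
    rw [transpose_mul, hLtinv, ← hLL,
      show Uᵀ * L⁻¹ * (L * L) * (L⁻¹ * U) = Uᵀ * ((L⁻¹ * L) * (L * L⁻¹)) * U by
        simp only [mul_assoc],
      hLinv, hLinv', one_mul, mul_one, ← hstarU, hUU]
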